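/- For c > 0 and θ ∈ [0,1], ψ_c(θ) ≥ θ²/(2+2c). -/

import Mathlib

open Set

lemma lemA {y : ℝ} (hy : 0 < y) (hy1 : y ≤ 1) :
    (1 - y)^2 / 2 ≤ -Real.log y + y - 1 := by
  set f : ℝ → ℝ := fun x => Real.log x - x + 1 + (1-x)^2/2 with hf
  have key : f y ≤ f 1 := by
    have hmono : MonotoneOn f (Icc y 1) := by
      apply monotoneOn_of_deriv_nonneg (convex_Icc y 1)
      · apply ContinuousOn.add
        · apply ContinuousOn.add
          · apply ContinuousOn.sub
            · exact Real.continuousOn_log.mono (fun x hx => (lt_of_lt_of_le hy hx.1).ne')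
            · exact continuousOn_id
          · exact continuousOn_const
        · fun_prop
      · intro x hx
        rw [interior_Icc] at hx
        have hx0 : 0 < x := lt_trans hy hx.1
        have hd : HasDerivAt f (x⁻¹ - 1 + (2*(1-x)*(0-1))/2) x := by
          have := (((Real.hasDerivAt_log hx0.ne').sub (hasDerivAt_id x)).add_const
            1).add ((((hasDerivAt_const x (1:ℝ)).sub (hasDerivAt_id x)).pow 2).div_const 2)
          simpa [hf, Pi.add_def] using this
        exact hd.differentiableAt.differentiableWithinAt
      · intro x hx
        rw [interior_Icc] at hx
        have hx0 : 0 < x := lt_trans hy hx.1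
        have hd : HasDerivAt f (x⁻¹ - 1 + (2*(1-x)*(0-1))/2) x := by
          have := (((Real.hasDerivAt_log hx0.ne').sub (hasDerivAt_id x)).add_const
            1).add ((((hasDerivAt_const x (1:ℝ)).sub (hasDerivAt_id x)).pow 2).div_const 2)
          simpa [hf, Pi.add_def] using this
        rw [hd.deriv]
        have h2 : 2 ≤ x⁻¹ + x := by
          nlinarith [sq_nonneg (x-1), mul_inv_cancel₀ hx0.ne', hx0]
        nlinarith
    exact hmono (left_mem_Icc.mpr hy1) (right_mem_Icc.mpr hy1) hy1
  simp only [hf, Real.log_one] at key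
  nlinarith [key]

lemma lemB {t : ℝ} (ht : 0 < t) (ht1 : t ≤ 1) :
    (1 - t)^2 / 2 ≤ t * Real.log t - t + 1 := by
  set g : ℝ → ℝ := fun x => x * Real.log x - x + 1 - (1-x)^2/2 with hg
  have key : g 1 ≤ g t := by
    have hanti : AntitoneOn g (Icc t 1) := by
      apply antitoneOn_of_deriv_nonpos (convex_Icc t 1)
      · apply ContinuousOn.sub
        · apply ContinuousOn.add
          · apply ContinuousOn.sub
            · exact Real.continuous_mul_log.continuousOn
            · exact continuousOn_id
          · exact continuousOn_const
        · fun_prop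
      · intro x hx
        rw [interior_Icc] at hx
        have hx0 : 0 < x := lt_trans ht hx.1
        have hd : HasDerivAt g (Real.log x + 1 - 1 - (2*(1-x)*(0-1))/2) x := by
          have := (((Real.hasDerivAt_mul_log hx0.ne').sub (hasDerivAt_id x)).add_const
            1).sub ((((hasDerivAt_const x (1:ℝ)).sub (hasDerivAt_id x)).pow 2).div_const 2)
          simpa [hg, Pi.sub_def] using this
        exact hd.differentiableAt.differentiableWithinAt
      · intro x hx
        rw [interior_Icc] at hx
        have hx0 : 0 < x := lt_trans ht hx.1
        have hd : HasDerivAt g (Real.log x + 1 - 1 - (2*(1-x)*(0-1))/2) x := by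
          have := (((Real.hasDerivAt_mul_log hx0.ne').sub (hasDerivAt_id x)).add_const
            1).sub ((((hasDerivAt_const x (1:ℝ)).sub (hasDerivAt_id x)).pow 2).div_const 2)
          simpa [hg, Pi.sub_def] using this
        rw [hd.deriv]
        have := Real.log_le_sub_one_of_pos hx0
        nlinarith
    exact hanti (left_mem_Icc.mpr ht1) (right_mem_Icc.mpr ht1) ht1
  simp only [hg, Real.log_one] at key
  nlinarith [key]

lemma lemB' {u y : ℝ} (hu : 0 ≤ u) (huy : u ≤ y) (hy : 0 < y) :
    (u - y)^2 / (2*y) ≤ u * Real.log u - u * Real.log y - u + y := by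
  rcases eq_or_lt_of_le hu with h0 | h0
  · rw [← h0]
    simp [Real.log_zero]
    rw [div_le_iff₀ (by positivity)]
    nlinarith [hy]
  · have ht : 0 < u / y := div_pos h0 hy
    have ht1 : u / y ≤ 1 := (div_le_one hy).mpr huy
    have hB := lemB ht ht1
    have hlog : Real.log (u / y) = Real.log u - Real.log y :=
      Real.log_div h0.ne' hy.ne'
    rw [hlog] at hB
    have hmul := mul_le_mul_of_nonneg_left hB hy.le
    have e1 : y * ((1 - u/y)^2/2) = (u - y)^2/(2*y) := by
      field_simp
      ring
    have e2 : y * (u/y * (Real.log u - Real.log y) - u/y + 1)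
        = u * Real.log u - u * Real.log y - u + y := by
      field_simp
    rw [e1, e2] at hmul
    exact hmul

lemma main_ineq (c u : ℝ) (hc : 0 < c) (hu0 : 0 ≤ u) (hu1 : u ≤ 1) :
    c * (1-u)^2 / (2 + 2*c) ≤ u * Real.log u - (u + c) * Real.log ((u+c)/(1+c)) := by
  have h1c : 0 < 1 + c := by linarith
  set y : ℝ := (u + c) / (1 + c) with hy
  have hy0 : 0 < y := div_pos (by linarith) h1c
  have hy1 : y ≤ 1 := by rw [hy, div_le_one h1c]; linarith
  have huy : u ≤ y := by rw [hy, le_div_iff₀ h1c]; nlinarith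
  have hyy : (1 + c) * y = u + c := by rw [hy]; field_simp
  have D1 := lemB' hu0 huy hy0
  have D2 := lemA hy0 hy1
  have D2' : c * ((1-y)^2/2) ≤ c * (-Real.log y + y - 1) :=
    mul_le_mul_of_nonneg_left D2 hc.le
  have hid : u * Real.log u - (u + c) * Real.log y =
      (u * Real.log u - u * Real.log y - u + y) + c * (-Real.log y + y - 1) := by
    have h : (1 + c) * y - (u + c) = 0 := by rw [hyy]; ring
    nlinarith [h]
  have b1 : (u - y)^2 / 2 ≤ (u - y)^2 / (2 * y) := by
    apply div_le_div_of_nonneg_left (sq_nonneg _) (by positivity)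
    linarith
  rw [hid]
  have goal2 : c * (1-u)^2 / (2 + 2*c) =
      (c * (u - 1) / (1 + c))^2 / 2 + c * (((1 - u)/(1+c))^2/2) := by
    field_simp
    try ring
  have e1 : u - y = c * (u - 1) / (1 + c) := by
    rw [hy]; field_simp; try ring
  have e2 : 1 - y = (1 - u) / (1 + c) := by
    rw [hy]; field_simp; try ring
  rw [goal2, ← e1, ← e2]
  linarith [le_trans b1 D1, D2']

/-- Talagrand's function `ψ_c` (note `Real.log 0 = 0`, matching the convention `0·log 0 = 0`). -/
noncomputable def psiC (c : ℝ) (θ : ℝ) : ℝ :=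
  c⁻¹ * ((1 - θ) * Real.log (1 - θ) - (1 - θ + c) * Real.log ((1 - θ + c) / (1 + c)))

/-- For `c > 0` and `θ ∈ [0,1]`, `ψ_c(θ) ≥ θ²/(2+2c)`. -/
theorem stmt9 (c : ℝ) (hc : 0 < c) (θ : ℝ) (hθ : θ ∈ Icc (0:ℝ) 1) :
    θ ^ 2 / (2 + 2 * c) ≤ psiC c θ := by
  obtain ⟨h0, h1⟩ := hθ
  have hm := main_ineq c (1 - θ) hc (by linarith) (by linarith)
  have h1u : (1 : ℝ) - (1 - θ) = θ := by ring
  rw [h1u] at hm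
  unfold psiC
  have hkey : θ ^ 2 / (2 + 2 * c) = c⁻¹ * (c * θ^2 / (2 + 2*c)) := by
    field_simp
  rw [hkey]
  exact mul_le_mul_of_nonneg_left hm (inv_nonneg.mpr hc.le)
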